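/- Let v_1, …, v_M and w_1, …, w_M be real numbers with v_i ≥ a^{−1} for all i and w_i ≥ 0 with Σ_j w_j > 0, and let f_1, …, f_M satisfy |f_i| ≤ F. Then | Σ_i f_i v_i / Σ_j v_j − Σ_i f_i w_i / Σ_j w_j | ≤ a · | (1/M) Σ_i f_i (v_i − w_i) | + a F · | (1/M) Σ_i (v_i − w_i) |. -/

import Mathlib

open Finset

/-- deterministic perturbation bound for self-normalized weighted
averages.  If `v_i ≥ a⁻¹`, `w_i ≥ 0` with `Σ_j w_j > 0`, and `|f_i| ≤ F`, then
`|Σ f_i v_i / Σ v_j − Σ f_i w_i / Σ w_j|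
   ≤ a |(1/M) Σ f_i (v_i − w_i)| + a F |(1/M) Σ (v_i − w_i)|`. -/
theorem self_normalized_perturbation_bound (M : ℕ) (a F : ℝ) (ha : 0 < a)
    (v w f : Fin M → ℝ)
    (hv : ∀ i, a⁻¹ ≤ v i)
    (hw : ∀ i, 0 ≤ w i)
    (hwsum : 0 < ∑ j, w j)
    (hf : ∀ i, |f i| ≤ F) :
    |(∑ i, f i * v i) / (∑ j, v j) - (∑ i, f i * w i) / (∑ j, w j)| ≤
      a * |(M : ℝ)⁻¹ * ∑ i, f i * (v i - w i)| +
        a * F * |(M : ℝ)⁻¹ * ∑ i, (v i - w i)| := by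
  have hM : 0 < M := by
    rcases Nat.eq_zero_or_pos M with h | h
    · subst h; simp at hwsum
    · exact h
  have hMR : (0:ℝ) < (M:ℝ) := by exact_mod_cast hM
  have hF : 0 ≤ F := le_trans (abs_nonneg _) (hf ⟨0, hM⟩)
  have hSvge : (M:ℝ) * a⁻¹ ≤ ∑ j, v j := by
    calc (M:ℝ) * a⁻¹ = ∑ _j : Fin M, a⁻¹ := by simp [mul_comm]
    _ ≤ ∑ j, v j := Finset.sum_le_sum fun i _ => hv i
  have hSv : 0 < ∑ j, v j :=
    lt_of_lt_of_le (by positivity) hSvge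
  have hSvne : (∑ j, v j) ≠ 0 := ne_of_gt hSv
  have hSwne : (∑ j, w j) ≠ 0 := ne_of_gt hwsum
  have hB : |∑ i, f i * w i| ≤ F * ∑ j, w j := by
    calc |∑ i, f i * w i| ≤ ∑ i, |f i * w i| := Finset.abs_sum_le_sum_abs _ _
    _ ≤ ∑ i, F * w i := by
        refine Finset.sum_le_sum fun i _ => ?_
        rw [abs_mul, abs_of_nonneg (hw i)]
        exact mul_le_mul_of_nonneg_right (hf i) (hw i)
    _ = F * ∑ j, w j := by rw [Finset.mul_sum]
  have key : (∑ i, f i * v i) / (∑ j, v j) - (∑ i, f i * w i) / (∑ j, w j)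
      = (∑ i, f i * (v i - w i)) / (∑ j, v j)
        - ((∑ i, f i * w i) / (∑ j, w j)) * ((∑ i, (v i - w i)) / (∑ j, v j)) := by
    have h1 : (∑ i, f i * (v i - w i)) = (∑ i, f i * v i) - (∑ i, f i * w i) := by
      rw [← Finset.sum_sub_distrib]; congr 1; ext i; ring
    have h2 : (∑ i, (v i - w i)) = (∑ j, v j) - (∑ j, w j) :=
      Finset.sum_sub_distrib _ _
    rw [h1, h2]
    field_simp
    ring
  rw [key]
  have hinv : ((∑ j, v j))⁻¹ ≤ a / (M:ℝ) := by
    rw [inv_le_iff_one_le_mul₀ hSv] at *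
    calc (1:ℝ) = a / M * (M * a⁻¹) := by field_simp
    _ ≤ a / M * ∑ j, v j := by
        apply mul_le_mul_of_nonneg_left hSvge (by positivity)
  have step : ∀ X : ℝ, |X / (∑ j, v j)| ≤ a * |(M:ℝ)⁻¹ * X| := by
    intro X
    rw [abs_div, abs_of_pos hSv, abs_mul, abs_of_pos (inv_pos.mpr hMR),
      div_eq_mul_inv]
    calc |X| * (∑ j, v j)⁻¹ ≤ |X| * (a / M) :=
        mul_le_mul_of_nonneg_left hinv (abs_nonneg _)
    _ = a * ((M:ℝ)⁻¹ * |X|) := by ring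
  calc |(∑ i, f i * (v i - w i)) / (∑ j, v j)
        - ((∑ i, f i * w i) / (∑ j, w j)) * ((∑ i, (v i - w i)) / (∑ j, v j))|
      ≤ |(∑ i, f i * (v i - w i)) / (∑ j, v j)|
        + |((∑ i, f i * w i) / (∑ j, w j))| * |(∑ i, (v i - w i)) / (∑ j, v j)| := by
        rw [← abs_mul]; exact abs_sub _ _
    _ ≤ a * |(M:ℝ)⁻¹ * ∑ i, f i * (v i - w i)|
        + F * (a * |(M:ℝ)⁻¹ * ∑ i, (v i - w i)|) := by
        apply add_le_add (step _)
        apply mul_le_mul ?_ (step _) (abs_nonneg _) hF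
        rw [abs_div, abs_of_pos hwsum, div_le_iff₀ hwsum]
        exact hB
    _ = a * |(M:ℝ)⁻¹ * ∑ i, f i * (v i - w i)|
        + a * F * |(M:ℝ)⁻¹ * ∑ i, (v i - w i)| := by ring
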